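/- Let n ≥ 1, let K be a symmetric positive definite n × n real matrix, let Y = diag(y) for y ∈ {-1,1}^n, let μ ∈ ℝ^n, let σ > 0, let C > 0, and let α ∈ ℝ^n with 0 ≤ α_i < C for all i. Define the joint partition function Z(α) = [∫_{ℝ^n} φ_{μ,K}(ω) exp(α^T Y ω) dω] · [∫_ℝ (2πσ²)^{-1/2} e^{-b²/(2σ²)} exp(b · y^T α) db] · ∏_{i=1}^n [∫_{-∞}^1 C e^{-C(1-γ_i)} e^{-α_i γ_i} dγ_i]. Then -log Z(α) = -α^T Y μ - (1/2) α^T Y K Y α - (1/2) σ² (y^T α)² + Σ_{i=1}^n ( α_i + log(1 - α_i/C) ). (This is the dual objective of Corollary 3: with μ = Σ_{t<τ} k(X_{(τ)}, X_{(t)}) Y_{(t)} α̂_{(t)} and K = K_{(τ)}, maximizing -log Z(α) over α ≥ 0 subject to y^T α = 0 gives the optimal Lagrange multipliers α̂_{(τ)}, with the term α^T(1 - Yμ) weighting current multipliers by the prior prediction errors.) -/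

import Mathlib

open MeasureTheory Real Matrix

/-- The density of the Gaussian `N(μ, S)` on `ℝ^n`:
`φ_{μ,S}(x) = det (2π S)^{-1/2} exp (-(1/2) (x-μ)ᵀ S⁻¹ (x-μ))`. -/
noncomputable def gaussDensity {n : ℕ} (μ : Fin n → ℝ)
    (S : Matrix (Fin n) (Fin n) ℝ) (x : Fin n → ℝ) : ℝ :=
  (((2 * π) • S).det) ^ (-(1 : ℝ) / 2) *
    Real.exp (-(1 / 2) * ((x - μ) ⬝ᵥ S⁻¹ *ᵥ (x - μ)))

lemma integral_exp_quad {a : ℝ} (ha : 0 < a) (c : ℝ) :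
    ∫ x : ℝ, Real.exp (-a * x ^ 2 + c * x) = Real.sqrt (π / a) * Real.exp (c ^ 2 / (4 * a)) := by
  have h := integral_cexp_quadratic (b := (-a : ℂ)) (by simpa using ha) (c : ℂ) 0
  have hre : ∀ x : ℝ, ((-a : ℂ) * x ^ 2 + c * x + 0) = ((-a * x ^ 2 + c * x : ℝ) : ℂ) := by
    intro x; push_cast; ring
  rw [show ((π : ℂ) / -(-a : ℂ)) = ((π / a : ℝ) : ℂ) by push_cast; ring] at h
  have h2 : (((π / a : ℝ) : ℂ)) ^ ((1:ℂ)/2) = ((Real.sqrt (π/a) : ℝ) : ℂ) := by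
    rw [show ((1:ℂ)/2) = (((1:ℝ)/2 : ℝ) : ℂ) by norm_num,
      ← Complex.ofReal_cpow (by positivity)]
    norm_num [Real.sqrt_eq_rpow]
  simp_rw [hre, ← Complex.ofReal_exp] at h
  have h4 : (∫ x : ℝ, ((rexp (-a*x^2+c*x) : ℝ) : ℂ)) =
      ((∫ x : ℝ, rexp (-a*x^2+c*x) : ℝ) : ℂ) := integral_ofReal
  rw [h4, h2] at h
  have h3 : ((0:ℂ) - (c:ℂ)^2 / (4 * (-a:ℂ))) = ((c^2/(4*a) : ℝ) : ℂ) := by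
    push_cast; field_simp; ring
  rw [h3, ← Complex.ofReal_exp, ← Complex.ofReal_mul] at h
  exact_mod_cast h

lemma integral_exp_Ioi_neg_mul {k : ℝ} (hk : 0 < k) (c : ℝ) :
    ∫ x in Set.Ioi c, Real.exp (-(k * x)) = Real.exp (-(k * c)) / k := by
  have hd : ∀ x ∈ Set.Ici c, HasDerivAt (fun x => -Real.exp (-(k * x)) / k)
      (Real.exp (-(k * x))) x := by
    intro x _
    have : HasDerivAt (fun x => -(k * x)) (-k) x := by
      simpa using ((hasDerivAt_id x).const_mul k).fun_neg
    have := (this.exp.fun_neg).div_const k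
    exact this.congr_deriv (by rw [mul_neg, neg_neg, mul_div_assoc, div_self hk.ne', mul_one])
  have ht : Filter.Tendsto (fun x => -Real.exp (-(k * x)) / k) Filter.atTop (nhds 0) := by
    have : Filter.Tendsto (fun x : ℝ => -(k * x)) Filter.atTop Filter.atBot := by
      exact Filter.tendsto_neg_atBot_iff.mpr (Filter.tendsto_id.const_mul_atTop hk)
    simpa using ((Real.tendsto_exp_atBot.comp this).neg).div_const k
  have hint : IntegrableOn (fun x => Real.exp (-(k * x))) (Set.Ioi c) := by
    simpa [mul_comm] using exp_neg_integrableOn_Ioi c hk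
  have := integral_Ioi_of_hasDerivAt_of_tendsto
    (f := fun x => -Real.exp (-(k * x)) / k) (hd c Set.self_mem_Ici).continuousAt.continuousWithinAt
    (fun x hx => hd x (Set.Ioi_subset_Ici_self hx)) hint ht
  rw [this]; ring

lemma integral_exp_Iic_mul {k : ℝ} (hk : 0 < k) :
    ∫ γ in Set.Iic (1:ℝ), Real.exp (k * γ) = Real.exp k / k := by
  have h := integral_comp_neg_Iic (1:ℝ) (fun x => Real.exp (-(k * x)))
  simp only [mul_neg, neg_neg] at h
  rw [h, integral_exp_Ioi_neg_mul hk]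
  norm_num

open Matrix in
lemma integral_comp_mulVec' {n : ℕ} (B : Matrix (Fin n) (Fin n) ℝ) (hB : B.det ≠ 0)
    (f : (Fin n → ℝ) → ℝ) (hf : Continuous f) :
    ∫ u : Fin n → ℝ, f (B *ᵥ u) = |B.det|⁻¹ * ∫ x : Fin n → ℝ, f x := by
  have hdet : LinearMap.det (Matrix.toLin' B) ≠ 0 := by
    rwa [LinearMap.det_toLin']
  have hmap := Real.map_linearMap_volume_pi_eq_smul_volume_pi hdet
  have hmeas : Measurable (Matrix.toLin' B) :=
    (Matrix.toLin' B).continuous_of_finiteDimensional.measurable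
  calc ∫ u : Fin n → ℝ, f (B *ᵥ u)
      = ∫ u : Fin n → ℝ, f ((Matrix.toLin' B) u) := by simp [Matrix.toLin'_apply]
    _ = ∫ x, f x ∂(Measure.map (Matrix.toLin' B) volume) := by
        rw [integral_map hmeas.aemeasurable hf.aestronglyMeasurable]
    _ = ∫ x, f x ∂(ENNReal.ofReal |(LinearMap.det (Matrix.toLin' B))⁻¹| • volume) := by rw [hmap]
    _ = |B.det|⁻¹ * ∫ x : Fin n → ℝ, f x := by
        rw [integral_smul_measure, ENNReal.toReal_ofReal (abs_nonneg _), LinearMap.det_toLin',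
          abs_inv, smul_eq_mul]

lemma sqrt_pow' (x : ℝ) (hx : 0 ≤ x) (n : ℕ) :
    Real.sqrt (x ^ n) = (Real.sqrt x) ^ n := by
  induction n with
  | zero => simp
  | succ m ih => rw [pow_succ, pow_succ, Real.sqrt_mul (by positivity), ih]

open scoped MatrixOrder in
/-- The Gaussian partition function: `∫ φ_{μ,K}(ω) e^{cᵀω} dω = e^{cᵀμ + cᵀKc/2}`. -/
lemma gauss_partition {n : ℕ} (K : Matrix (Fin n) (Fin n) ℝ) (hK : K.PosDef)
    (μ c : Fin n → ℝ) :
    ∫ ω : Fin n → ℝ, gaussDensity μ K ω * Real.exp (c ⬝ᵥ ω)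
      = Real.exp (c ⬝ᵥ μ + 1/2 * (c ⬝ᵥ K *ᵥ c)) := by
  classical
  set B := CFC.sqrt K with hBdef
  have hBB : B * B = K := CFC.sqrt_mul_sqrt_self K hK.posSemidef.nonneg
  have hBsym : Bᵀ = B := by
    have h := (CFC.sqrt_nonneg K).posSemidef.1
    rwa [Matrix.IsHermitian, conjTranspose_eq_transpose_of_trivial] at h
  have hKdet : 0 < K.det := hK.det_pos
  have hBdet2 : B.det * B.det = K.det := by rw [← Matrix.det_mul, hBB]
  have hBne : B.det ≠ 0 := by
    intro h; rw [h, mul_zero] at hBdet2; exact (ne_of_gt hKdet) hBdet2.symm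
  have hBsqrt : |B.det| = Real.sqrt K.det := by
    have habs : B.det * B.det = |B.det| * |B.det| := (abs_mul_abs_self B.det).symm
    rw [← hBdet2, habs, Real.sqrt_mul_self (abs_nonneg _)]
  -- swap lemma
  have swap : ∀ u w : Fin n → ℝ, (B *ᵥ u) ⬝ᵥ w = u ⬝ᵥ (B *ᵥ w) := by
    intro u w
    calc (B *ᵥ u) ⬝ᵥ w = w ⬝ᵥ (B *ᵥ u) := dotProduct_comm _ _
      _ = (w ᵥ* B) ⬝ᵥ u := dotProduct_mulVec w B u
      _ = u ⬝ᵥ (w ᵥ* B) := dotProduct_comm _ _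
      _ = u ⬝ᵥ (B *ᵥ w) := by rw [← Matrix.mulVec_transpose, hBsym]
  have hKinvB : K⁻¹ * B = B⁻¹ := by
    rw [← hBB, Matrix.mul_inv_rev, Matrix.mul_assoc,
      Matrix.nonsing_inv_mul B (isUnit_iff_ne_zero.mpr hBne), Matrix.mul_one]
  have key1 : ∀ u : Fin n → ℝ, (B *ᵥ u) ⬝ᵥ K⁻¹ *ᵥ (B *ᵥ u) = u ⬝ᵥ u := by
    intro u
    rw [swap, Matrix.mulVec_mulVec, Matrix.mulVec_mulVec, Matrix.mul_assoc, hKinvB,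
      Matrix.mul_nonsing_inv B (isUnit_iff_ne_zero.mpr hBne), Matrix.one_mulVec]
  have key2 : ∀ u : Fin n → ℝ, c ⬝ᵥ (B *ᵥ u) = (B *ᵥ c) ⬝ᵥ u := fun u => (swap c u).symm
  have key3 : (B *ᵥ c) ⬝ᵥ (B *ᵥ c) = c ⬝ᵥ K *ᵥ c := by
    rw [swap, Matrix.mulVec_mulVec, hBB]
  set d : Fin n → ℝ := B *ᵥ c with hd
  set g : (Fin n → ℝ) → ℝ :=
    fun x => Real.exp (-(1/2) * (x ⬝ᵥ K⁻¹ *ᵥ x) + c ⬝ᵥ x) with hgdef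
  have hgcont : Continuous g := by
    apply Real.continuous_exp.comp
    apply Continuous.add
    · apply Continuous.mul continuous_const
      simp only [dotProduct, Matrix.mulVec]
      exact continuous_finset_sum _ fun i _ => ((continuous_apply i).mul
        (continuous_finset_sum _ fun j _ => (continuous_const.mul (continuous_apply j))))
    · show Continuous fun x : Fin n → ℝ => ∑ i, c i * x i
      exact continuous_finset_sum _ fun i _ => continuous_const.mul (continuous_apply i)
  set D : ℝ := (((2 * π) • K).det) ^ (-(1 : ℝ) / 2) with hDdef
  -- step 1 : pull out constant and translate
  have step1 : ∫ ω : Fin n → ℝ, gaussDensity μ K ω * Real.exp (c ⬝ᵥ ω)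
      = D * (Real.exp (c ⬝ᵥ μ) * ∫ x, g x) := by
    have e1 : ∀ ω : Fin n → ℝ, gaussDensity μ K ω * Real.exp (c ⬝ᵥ ω)
        = D * Real.exp (-(1/2) * ((ω - μ) ⬝ᵥ K⁻¹ *ᵥ (ω - μ)) + c ⬝ᵥ ω) := by
      intro ω; rw [gaussDensity, mul_assoc, ← Real.exp_add]
    simp_rw [e1]
    rw [MeasureTheory.integral_const_mul]
    congr 1
    have e2 : ∀ x : Fin n → ℝ,
        Real.exp (-(1/2) * (((x + μ) - μ) ⬝ᵥ K⁻¹ *ᵥ ((x + μ) - μ)) + c ⬝ᵥ (x + μ))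
          = Real.exp (c ⬝ᵥ μ) * g x := by
      intro x
      rw [hgdef, ← Real.exp_add, add_sub_cancel_right, dotProduct_add]
      congr 1; ring
    calc ∫ ω : Fin n → ℝ, Real.exp (-(1/2) * ((ω - μ) ⬝ᵥ K⁻¹ *ᵥ (ω - μ)) + c ⬝ᵥ ω)
        = ∫ x : Fin n → ℝ,
            Real.exp (-(1/2) * (((x + μ) - μ) ⬝ᵥ K⁻¹ *ᵥ ((x + μ) - μ)) + c ⬝ᵥ (x + μ)) :=
          (integral_add_right_eq_self
            (fun ω => Real.exp (-(1/2) * ((ω - μ) ⬝ᵥ K⁻¹ *ᵥ (ω - μ)) + c ⬝ᵥ ω)) μ).symm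
      _ = ∫ x : Fin n → ℝ, Real.exp (c ⬝ᵥ μ) * g x := by simp_rw [e2]
      _ = Real.exp (c ⬝ᵥ μ) * ∫ x, g x := MeasureTheory.integral_const_mul _ _
  -- step 2 : change of variables
  have step2 : ∫ x, g x = |B.det| * ∫ u : Fin n → ℝ, g (B *ᵥ u) := by
    rw [integral_comp_mulVec' B hBne g hgcont]
    have : |B.det| ≠ 0 := abs_ne_zero.mpr hBne
    field_simp
  -- step 3 : the integrand in product form
  have step3 : ∀ u : Fin n → ℝ,
      g (B *ᵥ u) = ∏ i, Real.exp (-(1/2) * (u i) ^ 2 + d i * u i) := by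
    intro u
    rw [hgdef]
    simp only
    rw [key1 u, key2 u, ← Real.exp_sum]
    congr 1
    simp only [dotProduct, Finset.mul_sum, ← Finset.sum_add_distrib]
    exact Finset.sum_congr rfl fun i _ => by ring
  -- step 4 : product of 1-D integrals
  have step4 : ∫ u : Fin n → ℝ, ∏ i, Real.exp (-(1/2) * (u i) ^ 2 + d i * u i)
      = ∏ i, ∫ t : ℝ, Real.exp (-(1/2) * t ^ 2 + d i * t) :=
    MeasureTheory.integral_fintype_prod_eq_prod
      (fun i t => Real.exp (-(1/2) * t ^ 2 + d i * t))
  have step5 : ∀ i, ∫ t : ℝ, Real.exp (-(1/2) * t ^ 2 + d i * t)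
      = Real.sqrt (2 * π) * Real.exp ((d i) ^ 2 / 2) := by
    intro i
    have := integral_exp_quad (a := (1/2 : ℝ)) (by norm_num) (d i)
    rw [this, show π / (1/2 : ℝ) = 2 * π by ring, show (4 : ℝ) * (1/2) = 2 by norm_num]
  have hsum : ∑ i, (d i) ^ 2 / 2 = 1/2 * (c ⬝ᵥ K *ᵥ c) := by
    rw [← key3, hd, dotProduct]
    rw [Finset.mul_sum]
    exact Finset.sum_congr rfl fun i _ => by ring
  have step6 : ∏ i, (Real.sqrt (2 * π) * Real.exp ((d i) ^ 2 / 2))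
      = Real.sqrt (2 * π) ^ n * Real.exp (1/2 * (c ⬝ᵥ K *ᵥ c)) := by
    rw [Finset.prod_mul_distrib, Finset.prod_const, ← Real.exp_sum, hsum]
    simp
  -- the constant
  have hconst : D * |B.det| * Real.sqrt (2 * π) ^ n = 1 := by
    have hcard : (((2 * π) • K).det) = (2*π) ^ n * K.det := by
      rw [Matrix.det_smul]; simp
    have hP : (0:ℝ) < (2*π)^n * K.det := by positivity
    have hsq : Real.sqrt ((2*π)^n * K.det) = Real.sqrt (2*π) ^ n * |B.det| := by
      rw [Real.sqrt_mul (by positivity), sqrt_pow' _ (by positivity), hBsqrt]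
    have hD2 : D = (Real.sqrt ((2*π)^n * K.det))⁻¹ := by
      rw [hDdef, hcard, neg_div, Real.rpow_neg hP.le, ← Real.sqrt_eq_rpow]
    rw [hD2, hsq]
    have h1 : Real.sqrt (2*π) ^ n > 0 := by positivity
    field_simp
  -- put it all together
  rw [step1, step2]
  simp_rw [step3]
  rw [step4]
  simp_rw [step5]
  rw [step6, Real.exp_add]
  nlinarith [hconst, abs_nonneg B.det, Real.exp_pos (c ⬝ᵥ μ), Real.exp_pos (1/2 * (c ⬝ᵥ K *ᵥ c)),
    mul_pos (Real.exp_pos (c ⬝ᵥ μ)) (Real.exp_pos (1/2 * (c ⬝ᵥ K *ᵥ c)))]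

/-- The Gaussian bias partition function. -/
lemma bias_partition {σ : ℝ} (hσ : 0 < σ) (s : ℝ) :
    ∫ b : ℝ, (2 * π * σ ^ 2) ^ (-(1 : ℝ) / 2) *
        Real.exp (-b ^ 2 / (2 * σ ^ 2)) * Real.exp (b * s)
      = Real.exp (1/2 * σ ^ 2 * s ^ 2) := by
  have ha : (0:ℝ) < 1 / (2 * σ ^ 2) := by positivity
  have e1 : ∀ b : ℝ, (2 * π * σ ^ 2) ^ (-(1 : ℝ) / 2) *
      Real.exp (-b ^ 2 / (2 * σ ^ 2)) * Real.exp (b * s)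
      = (2 * π * σ ^ 2) ^ (-(1 : ℝ) / 2) *
        Real.exp (-(1 / (2 * σ ^ 2)) * b ^ 2 + s * b) := by
    intro b
    rw [mul_assoc, ← Real.exp_add]
    congr 2
    field_simp
  simp_rw [e1]
  rw [MeasureTheory.integral_const_mul, integral_exp_quad ha s]
  have h1 : π / (1 / (2 * σ ^ 2)) = 2 * π * σ ^ 2 := by field_simp
  have h2 : s ^ 2 / (4 * (1 / (2 * σ ^ 2))) = 1/2 * σ ^ 2 * s ^ 2 := by field_simp; ring
  rw [h1, h2]
  have h3 : (2 * π * σ ^ 2 : ℝ) ^ (-(1 : ℝ) / 2) = (Real.sqrt (2 * π * σ ^ 2))⁻¹ := by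
    rw [neg_div, Real.rpow_neg (by positivity), ← Real.sqrt_eq_rpow]
  rw [h3, ← mul_assoc, inv_mul_cancel₀ (Real.sqrt_ne_zero'.mpr (by positivity)), one_mul]

/-- The slack-variable partition function. -/
lemma slack_partition {C a : ℝ} (hC : 0 < C) (ha0 : 0 ≤ a) (haC : a < C) :
    ∫ γ in Set.Iic (1:ℝ), C * Real.exp (-C * (1 - γ)) * Real.exp (-a * γ)
      = Real.exp (-(a + Real.log (1 - a / C))) := by
  have hk : 0 < C - a := by linarith
  have e1 : ∀ γ : ℝ, C * Real.exp (-C * (1 - γ)) * Real.exp (-a * γ)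
      = (C * Real.exp (-C)) * Real.exp ((C - a) * γ) := by
    intro γ
    rw [mul_assoc, ← Real.exp_add, mul_assoc, ← Real.exp_add]
    congr 2
    ring
  simp_rw [e1]
  rw [MeasureTheory.integral_const_mul, integral_exp_Iic_mul hk]
  have h1 : 0 < 1 - a / C := by
    rw [sub_pos, div_lt_one hC]; exact haC
  rw [neg_add, Real.exp_add, Real.exp_neg (Real.log _), Real.exp_log h1, Real.exp_neg C,
    Real.exp_sub]
  have he : rexp (-a) * rexp a = 1 := by rw [← Real.exp_add]; simp
  field_simp
  linear_combination (-1 : ℝ) * he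

/-- the negative log of the joint MED partition function
`Z(α) = Z_ω(α) Z_b(α) ∏ᵢ Z_{γᵢ}(α)` equals the dual objective
`-αᵀYμ - αᵀYKYα/2 - σ²(yᵀα)²/2 + Σᵢ (αᵢ + log(1 - αᵢ/C))` of Corollary 3. -/
theorem seqMED_dual_objective (n : ℕ) (hn : 1 ≤ n)
    (K : Matrix (Fin n) (Fin n) ℝ) (hK : K.PosDef)
    (y : Fin n → ℝ) (hy : ∀ i, y i = 1 ∨ y i = -1)
    (μ : Fin n → ℝ) (σ C : ℝ) (hσ : 0 < σ) (hC : 0 < C)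
    (α : Fin n → ℝ) (hα : ∀ i, 0 ≤ α i ∧ α i < C) :
    -Real.log
        ((∫ ω : Fin n → ℝ,
            gaussDensity μ K ω * Real.exp (α ⬝ᵥ (Matrix.diagonal y) *ᵥ ω)) *
          (∫ b : ℝ, (2 * π * σ ^ 2) ^ (-(1 : ℝ) / 2) *
            Real.exp (-b ^ 2 / (2 * σ ^ 2)) * Real.exp (b * (y ⬝ᵥ α))) *
          ∏ i : Fin n, ∫ γ in Set.Iic (1 : ℝ),
            C * Real.exp (-C * (1 - γ)) * Real.exp (-(α i) * γ)) =
      -(α ⬝ᵥ (Matrix.diagonal y) *ᵥ μ) -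
        1 / 2 * (α ⬝ᵥ (Matrix.diagonal y * K * Matrix.diagonal y) *ᵥ α) -
        1 / 2 * σ ^ 2 * (y ⬝ᵥ α) ^ 2 +
        ∑ i : Fin n, (α i + Real.log (1 - α i / C)) := by
  classical
  set c : Fin n → ℝ := fun i => α i * y i with hcdef
  have hc : ∀ v : Fin n → ℝ, α ⬝ᵥ (Matrix.diagonal y) *ᵥ v = c ⬝ᵥ v := by
    intro v
    simp only [dotProduct, Matrix.mulVec_diagonal, hcdef]
    exact Finset.sum_congr rfl fun i _ => by ring
  have hq : c ⬝ᵥ K *ᵥ c = α ⬝ᵥ (Matrix.diagonal y * K * Matrix.diagonal y) *ᵥ α := by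
    simp only [Matrix.mulVec, dotProduct, Matrix.mul_diagonal, Matrix.diagonal_mul,
      Finset.mul_sum, hcdef]
    exact Finset.sum_congr rfl fun i _ => Finset.sum_congr rfl fun j _ => by ring
  have h1 : (∫ ω : Fin n → ℝ,
      gaussDensity μ K ω * Real.exp (α ⬝ᵥ (Matrix.diagonal y) *ᵥ ω))
      = Real.exp (c ⬝ᵥ μ + 1/2 * (c ⬝ᵥ K *ᵥ c)) := by
    simp_rw [hc]
    exact gauss_partition K hK μ c
  have h2 := bias_partition hσ (y ⬝ᵥ α)
  have h3 : (∏ i : Fin n, ∫ γ in Set.Iic (1 : ℝ),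
      C * Real.exp (-C * (1 - γ)) * Real.exp (-(α i) * γ))
      = Real.exp (-∑ i : Fin n, (α i + Real.log (1 - α i / C))) := by
    have : ∀ i : Fin n, (∫ γ in Set.Iic (1 : ℝ),
        C * Real.exp (-C * (1 - γ)) * Real.exp (-(α i) * γ))
        = Real.exp (-(α i + Real.log (1 - α i / C))) := fun i =>
      slack_partition hC (hα i).1 (hα i).2
    rw [Finset.prod_congr rfl fun i _ => this i, ← Real.exp_sum]
    congr 1
    rw [← Finset.sum_neg_distrib]
  rw [h1, h2, h3, ← Real.exp_add, ← Real.exp_add, Real.log_exp, hc μ]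
  rw [hq]
  ring
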